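/- Let f : [0,1] → ℝ be continuous. Then the upper box dimension of the graph of f satisfies ubd Γ(f) ≤ 2 − 1/I(f). -/

import Mathlib

open Set Filter Metric Topology
open scoped ENNReal NNReal

noncomputable section

/-- A partition of `[0,1]` with `n+1` points `0 ≤ x₀ < x₁ < ⋯ < xₙ ≤ 1`. -/
def IsPartition (n : ℕ) (x : Fin (n + 1) → ℝ) : Prop :=
  StrictMono x ∧ ∀ i, x i ∈ Set.Icc (0 : ℝ) 1

/-- The variational sum `∑ |f(xᵢ) - f(xᵢ₊₁)|^p` of `f` along a partition. -/
def varSum (f : ℝ → ℝ) (p : ℝ) (n : ℕ) (x : Fin (n + 1) → ℝ) : ℝ :=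
  ∑ i : Fin n, |f (x i.castSucc) - f (x i.succ)| ^ p

/-- The `p`-variation `V^p(f)` of `f` over `[0,1]`. -/
def pVar (f : ℝ → ℝ) (p : ℝ) : ℝ≥0∞ :=
  ⨆ (n : ℕ) (x : Fin (n + 1) → ℝ) (_ : IsPartition n x), ENNReal.ofReal (varSum f p n x)

/-- The variation index `I(f) = sup {p ≥ 1 | V^p(f) = ∞}` (with `sup ∅ = 1`). -/
def varIndex (f : ℝ → ℝ) : ℝ≥0∞ :=
  1 ⊔ ⨆ (p : ℝ) (_ : 1 ≤ p) (_ : pVar f p = ⊤), ENNReal.ofReal p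

/-- The `(p,r)`-variation `V_r^p(f)`: the supremum of variational sums over partitions
all of whose increments satisfy `|f(xᵢ) - f(xᵢ₊₁)| = r`. -/
def prVar (f : ℝ → ℝ) (p r : ℝ) : ℝ≥0∞ :=
  ⨆ (n : ℕ) (x : Fin (n + 1) → ℝ) (_ : IsPartition n x)
    (_ : ∀ i : Fin n, |f (x i.castSucc) - f (x i.succ)| = r),
    ENNReal.ofReal (varSum f p n x)

/-- The upper variation content `V̄^p(f) = limsup_{r→0⁺} V_r^p(f)`. -/
def uVarContent (f : ℝ → ℝ) (p : ℝ) : ℝ≥0∞ :=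
  limsup (fun r => prVar f p r) (𝓝[>] (0 : ℝ))

/-- The lower variation content `V̲^p(f) = liminf_{r→0⁺} V_r^p(f)`. -/
def lVarContent (f : ℝ → ℝ) (p : ℝ) : ℝ≥0∞ :=
  liminf (fun r => prVar f p r) (𝓝[>] (0 : ℝ))

/-- The upper variation index `Ī(f) = sup {p ≥ 1 | V̄^p(f) = ∞}` (with `sup ∅ = 1`). -/
def upperVarIndex (f : ℝ → ℝ) : ℝ≥0∞ :=
  1 ⊔ ⨆ (p : ℝ) (_ : 1 ≤ p) (_ : uVarContent f p = ⊤), ENNReal.ofReal p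

/-- The lower variation index `I̲(f) = sup {p ≥ 1 | V̲^p(f) = ∞}` (with `sup ∅ = 1`). -/
def lowerVarIndex (f : ℝ → ℝ) : ℝ≥0∞ :=
  1 ⊔ ⨆ (p : ℝ) (_ : 1 ≤ p) (_ : lVarContent f p = ⊤), ENNReal.ofReal p

/-- The tree pseudometric `d_f(x,y) = f x + f y - 2 min_{[x∧y, x∨y]} f`. -/
def treeDist (f : ℝ → ℝ) (x y : ℝ) : ℝ :=
  f x + f y - 2 * sInf (f '' Set.uIcc x y)

/-- The maximal cardinality of an `r`-separated subset of `A` with respect to the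
(pseudo)distance `d`. -/
def Nsep {X : Type*} (d : X → X → ℝ) (A : Set X) (r : ℝ) : ℕ :=
  sSup {n | ∃ s : Finset X, (s : Set X) ⊆ A ∧ s.card = n ∧
    ∀ x ∈ s, ∀ y ∈ s, x ≠ y → r < d x y}

/-- Upper box dimension associated with a counting function `N`. -/
def ubdOf (N : ℝ → ℕ) : ℝ≥0∞ :=
  limsup (fun r : ℝ => ENNReal.ofReal (Real.log (N r : ℝ) / (-Real.log r))) (𝓝[>] (0 : ℝ))

/-- Lower box dimension associated with a counting function `N`. -/
def lbdOf (N : ℝ → ℕ) : ℝ≥0∞ :=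
  liminf (fun r : ℝ => ENNReal.ofReal (Real.log (N r : ℝ) / (-Real.log r))) (𝓝[>] (0 : ℝ))

/-- Upper box dimension of the real tree `T(g)` of an excursion `g`, computed through
`r`-separated subsets of `([0,1], d_g)` (these correspond exactly to `r`-separated subsets
of the metric quotient `T(g)`). -/
def ubdTree (g : ℝ → ℝ) : ℝ≥0∞ := ubdOf (fun r => Nsep (treeDist g) (Set.Icc 0 1) r)

/-- Lower box dimension of the real tree `T(g)` of an excursion `g`. -/
def lbdTree (g : ℝ → ℝ) : ℝ≥0∞ := lbdOf (fun r => Nsep (treeDist g) (Set.Icc 0 1) r)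

/-- The modified upper box dimension of the real tree `T(g)`:
the infimum over countable covers of `sup_i ubd`. -/
def umbdTree (g : ℝ → ℝ) : ℝ≥0∞ :=
  ⨅ (U : ℕ → Set ℝ) (_ : Set.Icc (0 : ℝ) 1 ⊆ ⋃ i, U i),
    ⨆ i, ubdOf (fun r => Nsep (treeDist g) (U i ∩ Set.Icc 0 1) r)

/-- The graph `Γ(g) = {(x, g x) | x ∈ [0,1]} ⊆ ℝ²`. -/
def graphSet (g : ℝ → ℝ) : Set (ℝ × ℝ) := {q | ∃ x ∈ Set.Icc (0 : ℝ) 1, q = (x, g x)}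

/-- Upper box dimension of the graph of `g` over `[0,1]`. -/
def ubdGraph (g : ℝ → ℝ) : ℝ≥0∞ :=
  ubdOf (fun r => Nsep (fun u v : ℝ × ℝ => dist u v) (graphSet g) r)

/-- `τ : ℝ → ℝ` is a lift of a homeomorphism of the circle `S¹ = ℝ/ℤ`. -/
def IsCircleHomeoLift (τ : ℝ → ℝ) : Prop :=
  Continuous τ ∧ Function.Bijective τ ∧
    ((∀ x, τ (x + 1) = τ x + 1) ∨ (∀ x, τ (x + 1) = τ x - 1))

end

noncomputable section

namespace UbdGraphAux

open Finset in
lemma sep_card_le (s : Finset ℝ) (a b r : ℝ) (hr : 0 < r) (hab : a ≤ b)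
    (hmem : ∀ y ∈ s, y ∈ Set.Icc a b)
    (hsep : ∀ x ∈ s, ∀ y ∈ s, x ≠ y → r < |x - y|) :
    (s.card : ℝ) ≤ (b - a) / r + 1 := by
  have claim : ∀ x ∈ s, ∀ y ∈ s, x < y → ⌊(x - a) / r⌋₊ < ⌊(y - a) / r⌋₊ := by
    intro x hx y hy h
    have hxy : r < y - x := by
      have := hsep x hx y hy (ne_of_lt h)
      rw [abs_sub_comm, abs_of_pos (by linarith)] at this
      linarith
    have hax : a ≤ x := (hmem x hx).1
    have hfl : (⌊(x - a) / r⌋₊ : ℝ) ≤ (x - a) / r := Nat.floor_le (div_nonneg (by linarith) hr.le)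
    have h1 : ((⌊(x - a) / r⌋₊ : ℝ) + 1) ≤ (y - a) / r := by
      have : (x - a) / r + 1 ≤ (y - a) / r := by
        rw [div_add' _ _ _ (ne_of_gt hr), div_le_div_iff₀ hr hr]
        nlinarith
      linarith
    have := Nat.le_floor (α := ℝ) (n := ⌊(x - a) / r⌋₊ + 1) (by push_cast; exact h1)
    omega
  have hmaps : ∀ y ∈ s, ⌊(y - a) / r⌋₊ ∈ Finset.range (⌊(b - a) / r⌋₊ + 1) := by
    intro y hy
    rcases hmem y hy with ⟨h1, h2⟩
    simp only [Finset.mem_range, Nat.lt_succ_iff]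
    exact Nat.floor_le_floor (div_le_div_of_nonneg_right (by linarith) hr.le)
  have key := Finset.card_le_card_of_injOn (fun y => ⌊(y - a) / r⌋₊) hmaps (by
    intro x hx y hy hxy
    simp only at hxy
    by_contra hne
    rcases lt_or_gt_of_ne hne with h | h
    · exact absurd hxy (Nat.ne_of_lt (claim x hx y hy h))
    · exact absurd hxy.symm (Nat.ne_of_lt (claim y hy x hx h)))
  rw [Finset.card_range] at key
  calc (s.card : ℝ) ≤ (⌊(b - a) / r⌋₊ + 1 : ℕ) := by exact_mod_cast key
    _ ≤ (b - a) / r + 1 := by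
        push_cast
        have := Nat.floor_le (a := (b-a)/r) (div_nonneg (by linarith) hr.le)
        linarith



def stripSet (r : ℝ) (j : ℕ) : Set ℝ := Set.Icc (j*r) ((j+1)*r) ∩ Set.Icc 0 1

def osc (f : ℝ → ℝ) (r : ℝ) (j : ℕ) : ℝ :=
  sSup (f '' stripSet r j) - sInf (f '' stripSet r j)

lemma stripSet_compact (r : ℝ) (j : ℕ) : IsCompact (stripSet r j) :=
  isCompact_Icc.inter_right isClosed_Icc

lemma stripSet_subset (r : ℝ) (j : ℕ) : stripSet r j ⊆ Set.Icc 0 1 :=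
  Set.inter_subset_right

lemma osc_bounds (f : ℝ → ℝ) (hf : ContinuousOn f (Set.Icc 0 1)) (r : ℝ) (j : ℕ)
    {x : ℝ} (hx : x ∈ stripSet r j) :
    sInf (f '' stripSet r j) ≤ f x ∧ f x ≤ sSup (f '' stripSet r j) := by
  have hc : IsCompact (f '' stripSet r j) :=
    (stripSet_compact r j).image_of_continuousOn (hf.mono (stripSet_subset r j))
  exact ⟨csInf_le hc.bddBelow ⟨x, hx, rfl⟩, le_csSup hc.bddAbove ⟨x, hx, rfl⟩⟩

lemma osc_nonneg (f : ℝ → ℝ) (hf : ContinuousOn f (Set.Icc 0 1)) (r : ℝ) (j : ℕ) :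
    0 ≤ osc f r j := by
  rcases Set.eq_empty_or_nonempty (stripSet r j) with h | ⟨x, hx⟩
  · simp [osc, h, Real.sSup_empty, Real.sInf_empty]
  · have := osc_bounds f hf r j hx
    unfold osc; linarith


lemma count_le (f : ℝ → ℝ) (hf : ContinuousOn f (Set.Icc 0 1)) (r : ℝ) (hr : 0 < r)
    (s : Finset (ℝ × ℝ)) (hsub : ↑s ⊆ graphSet f)
    (hsep : ∀ x ∈ s, ∀ y ∈ s, x ≠ y → r < dist x y) :
    (s.card : ℝ) ≤ ∑ j ∈ Finset.range (⌊1/r⌋₊ + 1), (osc f r j / r + 1) := by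
  set M := ⌊1/r⌋₊ + 1 with hM
  have hmaps : ∀ q ∈ s, ⌊q.1 / r⌋₊ ∈ Finset.range M := by
    intro q hq
    obtain ⟨x, hx01, rfl⟩ := hsub hq
    simp only [Finset.mem_range, hM, Nat.lt_succ_iff]
    exact Nat.floor_le_floor (div_le_div_of_nonneg_right hx01.2 hr.le |>.trans (by rw [one_div]))
  rw [Finset.card_eq_sum_card_fiberwise hmaps]
  push_cast
  apply Finset.sum_le_sum
  intro j _
  set t := s.filter (fun q => ⌊q.1 / r⌋₊ = j) with ht
  -- every point of t is (x, f x) with x in stripSet r j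
  have hmem_strip : ∀ q ∈ t, ∃ x ∈ stripSet r j, q = (x, f x) := by
    intro q hq
    rw [ht, Finset.mem_filter] at hq
    obtain ⟨hq1, hq2⟩ := hq
    obtain ⟨x, hx01, rfl⟩ := hsub hq1
    refine ⟨x, ⟨⟨?_, ?_⟩, hx01⟩, rfl⟩
    · have := (Nat.floor_eq_iff (div_nonneg hx01.1 hr.le)).mp hq2
      calc (j : ℝ) * r ≤ (x / r) * r := by
            apply mul_le_mul_of_nonneg_right this.1 hr.le
        _ = x := div_mul_cancel₀ x (ne_of_gt hr)
    · have := (Nat.floor_eq_iff (div_nonneg hx01.1 hr.le)).mp hq2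
      have h2 : x / r < j + 1 := this.2
      calc x = (x / r) * r := (div_mul_cancel₀ x (ne_of_gt hr)).symm
        _ ≤ ((j : ℝ) + 1) * r := mul_le_mul_of_nonneg_right h2.le hr.le
  rcases Finset.eq_empty_or_nonempty t with h | ⟨q0, hq0⟩
  · rw [h]
    simp only [Finset.card_empty, Nat.cast_zero]
    have := osc_nonneg f hf r j
    have : 0 ≤ osc f r j / r := div_nonneg this hr.le
    linarith
  · -- strip nonempty
    obtain ⟨x0, hx0, _⟩ := hmem_strip q0 hq0
    -- snd injective on t
    have hinj : Set.InjOn Prod.snd (t : Set (ℝ × ℝ)) := by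
      intro q hq q' hq' hsnd
      obtain ⟨x, hx, rfl⟩ := hmem_strip q hq
      obtain ⟨x', hx', rfl⟩ := hmem_strip q' hq'
      by_contra hne
      have hxx : x ≠ x' := fun h => hne (by rw [h])
      have hdx : |x - x'| ≤ r := by
        have h1 := hx.1; have h2 := hx'.1
        rw [abs_sub_le_iff]
        constructor <;> linarith [h1.1, h1.2, h2.1, h2.2]
      have hfe : f x = f x' := hsnd
      have hd := hsep _ (Finset.mem_of_mem_filter _ (ht ▸ hq)) _
        (Finset.mem_of_mem_filter _ (ht ▸ hq')) (by simpa using hne)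
      rw [Prod.dist_eq, Real.dist_eq, Real.dist_eq] at hd
      rcases lt_max_iff.mp hd with hd' | hd'
      · exact absurd hd' (not_lt.mpr hdx)
      · rw [hfe] at hd'
        simp at hd'
        exact absurd hd' (not_lt.mpr hr.le)
    have hcard : t.card = (t.image Prod.snd).card :=
      (Finset.card_image_of_injOn hinj).symm
    rw [hcard]
    have hbound := sep_card_le (t.image Prod.snd) (sInf (f '' stripSet r j))
      (sSup (f '' stripSet r j)) r hr
      (by have := osc_bounds f hf r j hx0; linarith [this.1, this.2])
      (by
        intro y hy
        rw [Finset.mem_image] at hy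
        obtain ⟨q, hq, rfl⟩ := hy
        obtain ⟨x, hx, rfl⟩ := hmem_strip q hq
        exact ⟨(osc_bounds f hf r j hx).1, (osc_bounds f hf r j hx).2⟩)
      (by
        intro y1 hy1 y2 hy2 hne
        rw [Finset.mem_image] at hy1 hy2
        obtain ⟨q, hq, rfl⟩ := hy1
        obtain ⟨q', hq', rfl⟩ := hy2
        have hqne : q ≠ q' := fun h => hne (by rw [h])
        obtain ⟨x, hx, rfl⟩ := hmem_strip q hq
        obtain ⟨x', hx', rfl⟩ := hmem_strip q' hq'
        have hdx : |x - x'| ≤ r := by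
          have h1 := hx.1; have h2 := hx'.1
          rw [abs_sub_le_iff]
          constructor <;> linarith [h1.1, h1.2, h2.1, h2.2]
        have hd := hsep _ (Finset.mem_of_mem_filter _ (ht ▸ hq)) _
          (Finset.mem_of_mem_filter _ (ht ▸ hq')) hqne
        rw [Prod.dist_eq, Real.dist_eq, Real.dist_eq] at hd
        simp only [lt_max_iff] at hd
        rcases hd with hd | hd
        · exact absurd hd (not_lt.mpr hdx)
        · exact hd)
    unfold osc
    rw [sub_div] at hbound ⊢
    linarith

lemma varSum_le_toReal (f : ℝ → ℝ) (p : ℝ) (n : ℕ) (x : Fin (n+1) → ℝ)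
    (hpart : IsPartition n x) (hV : pVar f p ≠ ⊤) :
    varSum f p n x ≤ (pVar f p).toReal := by
  have hle : ENNReal.ofReal (varSum f p n x) ≤ pVar f p :=
    le_iSup_of_le n <| le_iSup_of_le x <| le_iSup_of_le hpart le_rfl
  have hnn : 0 ≤ varSum f p n x :=
    Finset.sum_nonneg fun i _ => Real.rpow_nonneg (abs_nonneg _) p
  calc varSum f p n x = (ENNReal.ofReal (varSum f p n x)).toReal :=
        (ENNReal.toReal_ofReal hnn).symm
    _ ≤ (pVar f p).toReal := ENNReal.toReal_mono hV hle


lemma sum_osc_rpow_le (f : ℝ → ℝ) (hf : ContinuousOn f (Set.Icc 0 1)) {p : ℝ} (hp : 1 ≤ p)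
    {r : ℝ} (hr : 0 < r) (M : ℕ) (hV : pVar f p ≠ ⊤) :
    ∑ j ∈ Finset.range M, osc f r j ^ p ≤ (pVar f p).toReal := by
  classical
  set J := (Finset.range M).filter (fun j => 0 < osc f r j) with hJ
  have hsum : ∑ j ∈ Finset.range M, osc f r j ^ p = ∑ j ∈ J, osc f r j ^ p := by
    refine (Finset.sum_subset (Finset.filter_subset _ _) ?_).symm
    intro j hjr hjn
    have h0 : osc f r j = 0 := by
      rcases (osc_nonneg f hf r j).lt_or_eq with h | h
      · exact absurd (Finset.mem_filter.mpr ⟨hjr, h⟩) hjn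
      · exact h.symm
    rw [h0, Real.zero_rpow (by linarith)]
  rw [hsum]
  -- choose extremal pairs
  have hex : ∀ j : ℕ, ∃ ab : ℝ × ℝ, j ∈ J →
      ab.1 ∈ stripSet r j ∧ ab.2 ∈ stripSet r j ∧ ab.1 < ab.2 ∧
      |f ab.1 - f ab.2| = osc f r j := by
    intro j
    by_cases hj : j ∈ J
    · have hosc : 0 < osc f r j := (Finset.mem_filter.mp hj).2
      have hne : (stripSet r j).Nonempty := by
        by_contra h
        rw [Set.not_nonempty_iff_eq_empty] at h
        rw [osc, h] at hosc
        simp [Real.sSup_empty, Real.sInf_empty] at hosc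
      have hcont := hf.mono (stripSet_subset r j)
      obtain ⟨u, hu, hmax⟩ := (stripSet_compact r j).exists_isMaxOn hne hcont
      obtain ⟨v, hv, hmin⟩ := (stripSet_compact r j).exists_isMinOn hne hcont
      have hsup : sSup (f '' stripSet r j) = f u :=
        IsGreatest.csSup_eq ⟨⟨u, hu, rfl⟩, by rintro y ⟨z, hz, rfl⟩; exact hmax hz⟩
      have hinf : sInf (f '' stripSet r j) = f v :=
        IsLeast.csInf_eq ⟨⟨v, hv, rfl⟩, by rintro y ⟨z, hz, rfl⟩; exact hmin hz⟩
      have hosc' : osc f r j = f u - f v := by rw [osc, hsup, hinf]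
      have hfuv : f v < f u := by rw [hosc'] at hosc; linarith
      have huv : u ≠ v := fun h => by rw [h] at hfuv; exact lt_irrefl _ hfuv
      rcases lt_or_gt_of_ne huv with h | h
      · exact ⟨(u, v), fun _ => ⟨hu, hv, h, by rw [abs_of_pos (by linarith)]; linarith⟩⟩
      · exact ⟨(v, u), fun _ => ⟨hv, hu, h, by rw [abs_of_neg (by linarith)]; linarith⟩⟩
    · exact ⟨(0, 0), fun h => absurd h hj⟩
  choose g hg using hex
  rcases Finset.eq_empty_or_nonempty J with hJe | ⟨j0, hj0⟩
  · rw [hJe]; simp [ENNReal.toReal_nonneg]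
  set S : Finset ℝ := J.biUnion (fun j => {(g j).1, (g j).2}) with hS
  have hSne : S.Nonempty := ⟨(g j0).1, Finset.mem_biUnion.mpr ⟨j0, hj0, by simp⟩⟩
  have hmemS : ∀ j ∈ J, (g j).1 ∈ S ∧ (g j).2 ∈ S := fun j hj =>
    ⟨Finset.mem_biUnion.mpr ⟨j, hj, by simp⟩, Finset.mem_biUnion.mpr ⟨j, hj, by simp⟩⟩
  have hSicc : ∀ z ∈ S, z ∈ Set.Icc (0:ℝ) 1 := by
    intro z hz
    obtain ⟨k, hk, hzk⟩ := Finset.mem_biUnion.mp hz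
    have := hg k hk
    rcases Finset.mem_insert.mp hzk with h | h
    · exact h ▸ (stripSet_subset r k) this.1
    · rw [Finset.mem_singleton.mp h]; exact (stripSet_subset r k) this.2.1
  -- adjacency: no element of S lies strictly between (g j).1 and (g j).2
  have hadj : ∀ j ∈ J, ∀ z ∈ S, z ≤ (g j).1 ∨ (g j).2 ≤ z := by
    intro j hj z hz
    obtain ⟨k, hk, hzk⟩ := Finset.mem_biUnion.mp hz
    have hgk := hg k hk
    have hgj := hg j hj
    have hzIcc : z ∈ Set.Icc ((k:ℝ)*r) ((k+1)*r) := by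
      rcases Finset.mem_insert.mp hzk with h | h
      · exact h ▸ hgk.1.1
      · rw [Finset.mem_singleton.mp h]; exact hgk.2.1.1
    rcases lt_trichotomy k j with h | h | h
    · left
      have h1 : ((k:ℝ)+1) * r ≤ (j:ℝ) * r := by
        have : ((k:ℝ)+1) ≤ (j:ℝ) := by exact_mod_cast Nat.succ_le_of_lt h
        exact mul_le_mul_of_nonneg_right this hr.le
      linarith [hzIcc.2, hgj.1.1.1]
    · subst h
      rcases Finset.mem_insert.mp hzk with h | h
      · exact Or.inl (le_of_eq h)
      · exact Or.inr (le_of_eq (Finset.mem_singleton.mp h).symm)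
    · right
      have h1 : ((j:ℝ)+1) * r ≤ (k:ℝ) * r := by
        have : ((j:ℝ)+1) ≤ (k:ℝ) := by exact_mod_cast Nat.succ_le_of_lt h
        exact mul_le_mul_of_nonneg_right this hr.le
      linarith [hzIcc.1, hgj.2.1.1.2]
  set n := S.card - 1 with hn
  have hcard : S.card = n + 1 := (Nat.succ_pred_eq_of_pos (Finset.card_pos.mpr hSne)).symm
  set e := S.orderIsoOfFin hcard with he
  set x : Fin (n+1) → ℝ := fun i => (e i : ℝ) with hx
  have hpart : IsPartition n x := by
    constructor
    · intro i i' hii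
      exact Subtype.coe_lt_coe.mpr (e.strictMono hii)
    · intro i
      exact hSicc _ (e i).2
  -- indices
  have hidx : ∀ j ∈ J, ∃ ι : Fin n, x ι.castSucc = (g j).1 ∧ x ι.succ = (g j).2 := by
    intro j hj
    obtain ⟨ha, hb⟩ := hmemS j hj
    set ia := e.symm ⟨(g j).1, ha⟩ with hia
    set ib := e.symm ⟨(g j).2, hb⟩ with hib
    have hlt : ia < ib := by
      apply e.symm.strictMono
      exact Subtype.mk_lt_mk.mpr (hg j hj).2.2.1
    have hvlt : (ia : ℕ) < (ib : ℕ) := hlt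
    have hibn : (ib : ℕ) ≤ n := Nat.lt_succ_iff.mp ib.isLt
    have hian : (ia : ℕ) < n := lt_of_lt_of_le hvlt hibn
    have hsucc : (ib : ℕ) = (ia : ℕ) + 1 := by
      by_contra hne
      have hgap : (ia : ℕ) + 1 < (ib : ℕ) := by omega
      set m : Fin (n+1) := ⟨(ia : ℕ) + 1, by omega⟩ with hm
      have h1 : ia < m := by rw [Fin.lt_def]; simp [hm]
      have h2 : m < ib := by rw [Fin.lt_def]; exact hgap
      have hz1 : (g j).1 < (e m : ℝ) := by
        have := e.strictMono h1
        rw [show e ia = ⟨(g j).1, ha⟩ from e.apply_symm_apply _] at this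
        exact this
      have hz2 : (e m : ℝ) < (g j).2 := by
        have := e.strictMono h2
        rw [show e ib = ⟨(g j).2, hb⟩ from e.apply_symm_apply _] at this
        exact this
      rcases hadj j hj (e m : ℝ) (e m).2 with h | h
      · linarith
      · linarith
    refine ⟨⟨(ia : ℕ), hian⟩, ?_, ?_⟩
    · have : (⟨(ia : ℕ), hian⟩ : Fin n).castSucc = ia := by
        apply Fin.ext; simp
      rw [hx, this]
      simp only [hia, e.apply_symm_apply]
    · have : (⟨(ia : ℕ), hian⟩ : Fin n).succ = ib := by
        apply Fin.ext; simp [hsucc]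
      rw [hx, this]
      simp only [hib, e.apply_symm_apply]
  have hidx' : ∀ j : {j // j ∈ J}, ∃ i : Fin n,
      x i.castSucc = (g j.1).1 ∧ x i.succ = (g j.1).2 := fun j => hidx j.1 j.2
  choose ι hι1 hι2 using hidx'
  have key : ∀ a b : ℕ, a ∈ J → b ∈ J → a < b → (g a).1 < (g b).1 := by
    intro a b ha hb hab
    have h1 := (hg a ha).2.2.1
    have h2 := (hg a ha).2.1.1.2
    have h3 := (hg b hb).1.1.1
    have h4 : ((a:ℝ)+1) * r ≤ (b:ℝ) * r := by
      have : ((a:ℝ)+1) ≤ (b:ℝ) := by exact_mod_cast Nat.succ_le_of_lt hab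
      exact mul_le_mul_of_nonneg_right this hr.le
    linarith
  have hinj : Function.Injective ι := by
    intro a b hab
    have hxe : (g a.1).1 = (g b.1).1 := by rw [← hι1 a, ← hι1 b, hab]
    apply Subtype.ext
    by_contra hne
    rcases lt_or_gt_of_ne hne with h | h
    · exact absurd hxe (ne_of_lt (key _ _ a.2 b.2 h))
    · exact absurd hxe.symm (ne_of_lt (key _ _ b.2 a.2 h))
  have hmain : ∑ j ∈ J, osc f r j ^ p ≤ varSum f p n x := by
    rw [← Finset.sum_attach J (fun j => osc f r j ^ p)]
    have heq : ∀ a ∈ J.attach, osc f r a.1 ^ p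
        = (fun i : Fin n => |f (x i.castSucc) - f (x i.succ)| ^ p) (ι a) := by
      intro a _
      simp only
      rw [hι1 a, hι2 a, (hg a.1 a.2).2.2.2]
    rw [Finset.sum_congr rfl heq]
    have himg := Finset.sum_image (s := J.attach) (g := ι)
      (f := fun i : Fin n => |f (x i.castSucc) - f (x i.succ)| ^ p)
      (fun a _ b _ h => hinj h)
    rw [← himg]
    apply Finset.sum_le_sum_of_subset_of_nonneg (Finset.subset_univ _)
    exact fun i _ _ => Real.rpow_nonneg (abs_nonneg _) p
  calc ∑ j ∈ J, osc f r j ^ p ≤ varSum f p n x := hmain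
    _ ≤ (pVar f p).toReal := varSum_le_toReal f p n x hpart hV

lemma Nsep_le_of_forall {X : Type*} (d : X → X → ℝ) (A : Set X) (r : ℝ) (B : ℝ)
    (hB : ∀ s : Finset X, (s : Set X) ⊆ A →
      (∀ x ∈ s, ∀ y ∈ s, x ≠ y → r < d x y) → (s.card : ℝ) ≤ B) :
    (Nsep d A r : ℝ) ≤ B := by
  classical
  set T := {n | ∃ s : Finset X, (s : Set X) ⊆ A ∧ s.card = n ∧
    ∀ x ∈ s, ∀ y ∈ s, x ≠ y → r < d x y} with hT
  have h0 : 0 ∈ T := ⟨∅, by simp, by simp, by simp⟩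
  have hbdd : ∀ n ∈ T, n ≤ ⌈B⌉₊ := by
    rintro n ⟨s, hs1, rfl, hs3⟩
    have := hB s hs1 hs3
    exact_mod_cast this.trans (Nat.le_ceil B)
  have hmem : sSup T ∈ T := Nat.sSup_mem ⟨0, h0⟩ ⟨⌈B⌉₊, hbdd⟩
  obtain ⟨s, hs1, hs2, hs3⟩ := hmem
  rw [Nsep, ← hT, ← hs2]
  exact hB s hs1 hs3


lemma ubdOf_le (N : ℝ → ℕ) (C s : ℝ) (hC : 1 ≤ C) (hs : 0 ≤ s)
    (h : ∀ r : ℝ, 0 < r → r ≤ 1 → (N r : ℝ) ≤ C * r ^ (-s)) :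
    ubdOf N ≤ ENNReal.ofReal s := by
  apply ENNReal.le_of_forall_pos_le_add
  intro ε hε _
  have hεr : (0:ℝ) < ε := hε
  have hCpos : (0:ℝ) < C := by linarith
  have hlogC : 0 ≤ Real.log C := Real.log_nonneg hC
  set δ : ℝ := min (1/2) (Real.exp (-(Real.log C)/ε)) with hδ
  have hδpos : 0 < δ := lt_min (by norm_num) (Real.exp_pos _)
  have hev : ∀ᶠ r in 𝓝[>] (0:ℝ),
      ENNReal.ofReal (Real.log (N r : ℝ) / (-Real.log r)) ≤ ENNReal.ofReal (s + ε) := by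
    filter_upwards [Ioo_mem_nhdsGT_of_mem (Set.mem_Ico.mpr ⟨le_refl (0:ℝ), hδpos⟩)]
    intro r hr
    obtain ⟨hr0, hrδ⟩ := hr
    have hr1 : r < 1 := lt_of_lt_of_le hrδ (le_trans (min_le_left _ _) (by norm_num))
    have hlogr : Real.log r < 0 := Real.log_neg hr0 hr1
    have hnlr : 0 < -Real.log r := by linarith
    -- -log r > log C / ε
    have hlog2 : Real.log r < -(Real.log C)/ε := by
      calc Real.log r < Real.log δ := Real.log_lt_log hr0 hrδ
        _ ≤ Real.log (Real.exp (-(Real.log C)/ε)) :=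
            Real.log_le_log hδpos (min_le_right _ _) |>.trans_eq rfl
        _ = -(Real.log C)/ε := Real.log_exp _
    have hkey : Real.log C ≤ (ε:ℝ) * (-Real.log r) := by
      have h2 : Real.log C / (ε:ℝ) < -Real.log r := by
        have := neg_lt_neg hlog2
        rw [neg_div'] at this
        simpa using this
      rw [div_lt_iff₀ hεr] at h2
      nlinarith [h2]
    rcases Nat.eq_zero_or_pos (N r) with hN | hN
    · rw [hN]
      simp only [Nat.cast_zero, Real.log_zero, zero_div, ENNReal.ofReal_zero]
      exact zero_le
    · have hN1 : (1:ℝ) ≤ (N r : ℝ) := by exact_mod_cast hN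
      have hrpow : (0:ℝ) < C * r ^ (-s) := by positivity
      have hlogN : Real.log (N r : ℝ) ≤ Real.log C + s * (-Real.log r) := by
        calc Real.log (N r : ℝ) ≤ Real.log (C * r ^ (-s)) :=
              Real.log_le_log (by linarith) (h r hr0 hr1.le)
          _ = Real.log C + Real.log (r ^ (-s)) :=
              Real.log_mul (ne_of_gt hCpos) (by positivity)
          _ = Real.log C + (-s) * Real.log r := by rw [Real.log_rpow hr0]
          _ = Real.log C + s * (-Real.log r) := by ring
      apply ENNReal.ofReal_le_ofReal
      rw [div_le_iff₀ hnlr]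
      calc Real.log (N r : ℝ) ≤ Real.log C + s * (-Real.log r) := hlogN
        _ ≤ ε * (-Real.log r) + s * (-Real.log r) := by linarith
        _ = (s + ε) * (-Real.log r) := by ring
  calc ubdOf N ≤ ENNReal.ofReal (s + ε) := limsup_le_of_le (by isBoundedDefault) hev
    _ = ENNReal.ofReal s + ENNReal.ofReal ε := ENNReal.ofReal_add hs hεr.le
    _ = ENNReal.ofReal s + ε := by rw [ENNReal.ofReal_coe_nnreal]

lemma floorM_le (r : ℝ) (hr0 : 0 < r) (hr1 : r ≤ 1) :
    ((⌊1/r⌋₊ + 1 : ℕ) : ℝ) ≤ 2/r := by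
  have h1 : (⌊1/r⌋₊ : ℝ) ≤ 1/r := Nat.floor_le (by positivity)
  have h2 : (1:ℝ) ≤ 1/r := by rw [le_div_iff₀ hr0]; linarith
  have h3 : (2:ℝ)/r = 1/r + 1/r := by ring
  push_cast; linarith


lemma core_bound (f : ℝ → ℝ) (hf : ContinuousOn f (Set.Icc 0 1)) {p : ℝ} (hp : 1 ≤ p)
    (hV : pVar f p ≠ ⊤) :
    ubdGraph f ≤ ENNReal.ofReal (2 - 1/p) := by
  have hppos : (0:ℝ) < p := by linarith
  have hip : 1/p ≤ 1 := by rw [div_le_one hppos]; exact hp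
  have hipnn : 0 ≤ 1/p := by positivity
  set V := (pVar f p).toReal with hVdef
  have hVnn : 0 ≤ V := ENNReal.toReal_nonneg
  set C : ℝ := V ^ (1/p) * 2 ^ (1 - 1/p) + 2 with hC
  have hCnn1 : 0 ≤ V ^ (1/p) := Real.rpow_nonneg hVnn _
  have hCnn2 : 0 ≤ (2:ℝ) ^ (1 - 1/p) := Real.rpow_nonneg (by norm_num) _
  have hC1 : 1 ≤ C := by
    have := mul_nonneg hCnn1 hCnn2
    simp only [hC]
    linarith
  apply ubdOf_le _ C (2 - 1/p) hC1 (by linarith)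
  intro r hr0 hr1
  apply Nsep_le_of_forall
  intro t hsub hsep
  set M := ⌊1/r⌋₊ + 1 with hM
  have hMle : (M:ℝ) ≤ 2/r := floorM_le r hr0 hr1
  have hMnn : (0:ℝ) ≤ M := Nat.cast_nonneg _
  have step1 : (t.card : ℝ) ≤ (∑ j ∈ Finset.range M, osc f r j) / r + M := by
    have h := count_le f hf r hr0 t hsub hsep
    rw [← hM, Finset.sum_add_distrib, Finset.sum_const, Finset.card_range, nsmul_eq_mul,
      mul_one, ← Finset.sum_div] at h
    exact h
  have hOnn : 0 ≤ ∑ j ∈ Finset.range M, osc f r j :=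
    Finset.sum_nonneg fun j _ => osc_nonneg f hf r j
  -- Hölder
  have hHold : (∑ j ∈ Finset.range M, osc f r j) ^ p ≤ (M:ℝ) ^ (p-1) * V := by
    have h1 := Real.rpow_sum_le_const_mul_sum_rpow (Finset.range M) (osc f r) hp
    have habs1 : ∑ i ∈ Finset.range M, |osc f r i| = ∑ i ∈ Finset.range M, osc f r i :=
      Finset.sum_congr rfl (fun j _ => abs_of_nonneg (osc_nonneg f hf r j))
    have habs2 : ∑ i ∈ Finset.range M, |osc f r i| ^ p = ∑ i ∈ Finset.range M, osc f r i ^ p :=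
      Finset.sum_congr rfl (fun j _ => by rw [abs_of_nonneg (osc_nonneg f hf r j)])
    rw [habs1, habs2, Finset.card_range] at h1
    calc (∑ j ∈ Finset.range M, osc f r j) ^ p
        ≤ (M:ℝ) ^ (p-1) * ∑ j ∈ Finset.range M, osc f r j ^ p := h1
      _ ≤ (M:ℝ) ^ (p-1) * V := by
          apply mul_le_mul_of_nonneg_left (sum_osc_rpow_le f hf hp hr0 M hV)
          exact Real.rpow_nonneg hMnn _
  have step2 : ∑ j ∈ Finset.range M, osc f r j ≤ V ^ (1/p) * 2 ^ (1-1/p) * r ^ (-(1-1/p)) := by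
    have h2 : ((∑ j ∈ Finset.range M, osc f r j) ^ p) ^ (1/p) ≤ ((M:ℝ) ^ (p-1) * V) ^ (1/p) :=
      Real.rpow_le_rpow (Real.rpow_nonneg hOnn _) hHold hipnn
    have hL : ((∑ j ∈ Finset.range M, osc f r j) ^ p) ^ (1/p)
        = ∑ j ∈ Finset.range M, osc f r j := by
      rw [one_div, Real.rpow_rpow_inv hOnn (ne_of_gt hppos)]
    have hR : ((M:ℝ) ^ (p-1) * V) ^ (1/p) = (M:ℝ) ^ (1-1/p) * V ^ (1/p) := by
      rw [Real.mul_rpow (Real.rpow_nonneg hMnn _) hVnn, ← Real.rpow_mul hMnn]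
      congr 2
      field_simp
    have hM2 : ((M:ℝ)) ^ (1-1/p) ≤ (2/r) ^ (1-1/p) :=
      Real.rpow_le_rpow hMnn hMle (by linarith)
    have h2r : ((2:ℝ)/r) ^ (1-1/p) = 2 ^ (1-1/p) * r ^ (-(1-1/p)) := by
      rw [Real.div_rpow (by norm_num) hr0.le, Real.rpow_neg hr0.le, div_eq_mul_inv]
    calc ∑ j ∈ Finset.range M, osc f r j
        = ((∑ j ∈ Finset.range M, osc f r j) ^ p) ^ (1/p) := hL.symm
      _ ≤ ((M:ℝ) ^ (p-1) * V) ^ (1/p) := h2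
      _ = (M:ℝ) ^ (1-1/p) * V ^ (1/p) := hR
      _ ≤ (2/r) ^ (1-1/p) * V ^ (1/p) :=
          mul_le_mul_of_nonneg_right hM2 hCnn1
      _ = V ^ (1/p) * 2 ^ (1-1/p) * r ^ (-(1-1/p)) := by rw [h2r]; ring
  have hx1 : r ^ (-(1-1/p)) / r = r ^ (-(2-1/p)) := by
    rw [div_eq_mul_inv, ← Real.rpow_neg_one r, ← Real.rpow_add hr0]
    congr 1
    ring
  have hx2 : 2/r ≤ 2 * r ^ (-(2-1/p)) := by
    rw [div_eq_mul_inv, ← Real.rpow_neg_one r]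
    apply mul_le_mul_of_nonneg_left _ (by norm_num)
    exact Real.rpow_le_rpow_of_exponent_ge hr0 hr1 (by linarith)
  have step3 : (∑ j ∈ Finset.range M, osc f r j) / r
      ≤ V ^ (1/p) * 2 ^ (1-1/p) * r ^ (-(2-1/p)) := by
    calc (∑ j ∈ Finset.range M, osc f r j) / r
        ≤ (V ^ (1/p) * 2 ^ (1-1/p) * r ^ (-(1-1/p))) / r := by gcongr
      _ = V ^ (1/p) * 2 ^ (1-1/p) * (r ^ (-(1-1/p)) / r) := by ring
      _ = V ^ (1/p) * 2 ^ (1-1/p) * r ^ (-(2-1/p)) := by rw [hx1]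
  have hrpow_nn : 0 ≤ r ^ (-(2-1/p)) := Real.rpow_nonneg hr0.le _
  calc (t.card : ℝ) ≤ (∑ j ∈ Finset.range M, osc f r j) / r + M := step1
    _ ≤ V ^ (1/p) * 2 ^ (1-1/p) * r ^ (-(2-1/p)) + 2/r := by linarith [hMle, step3]
    _ ≤ V ^ (1/p) * 2 ^ (1-1/p) * r ^ (-(2-1/p)) + 2 * r ^ (-(2-1/p)) := by linarith [hx2]
    _ = C * r ^ (-(2-1/p)) := by rw [hC]; ring

lemma trivial_bound (f : ℝ → ℝ) (hf : ContinuousOn f (Set.Icc 0 1)) :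
    ubdGraph f ≤ ENNReal.ofReal 2 := by
  obtain ⟨B, hB⟩ := isCompact_Icc.exists_bound_of_continuousOn hf
  have hB0 : 0 ≤ B := le_trans (norm_nonneg (f 0)) (hB 0 ⟨le_refl 0, zero_le_one⟩)
  apply ubdOf_le _ (4*B+2) 2 (by linarith) (by norm_num)
  intro r hr0 hr1
  apply Nsep_le_of_forall
  intro t hsub hsep
  set M := ⌊1/r⌋₊ + 1 with hM
  have hMle : (M:ℝ) ≤ 2/r := floorM_le r hr0 hr1
  have hosc : ∀ j, osc f r j ≤ 2*B := by
    intro j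
    rcases Set.eq_empty_or_nonempty (stripSet r j) with h | ⟨x0, hx0⟩
    · rw [osc, h]
      simp only [Set.image_empty, Real.sSup_empty, Real.sInf_empty]
      linarith
    · have hsup : sSup (f '' stripSet r j) ≤ B := by
        refine csSup_le ⟨f x0, ⟨x0, hx0, rfl⟩⟩ ?_
        rintro y ⟨z, hz, rfl⟩
        have := hB z (stripSet_subset r j hz)
        rw [Real.norm_eq_abs] at this
        exact le_trans (le_abs_self _) this
      have hinf : -B ≤ sInf (f '' stripSet r j) := by
        refine le_csInf ⟨f x0, ⟨x0, hx0, rfl⟩⟩ ?_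
        rintro y ⟨z, hz, rfl⟩
        have := hB z (stripSet_subset r j hz)
        rw [Real.norm_eq_abs] at this
        linarith [neg_abs_le (f z)]
      rw [osc]; linarith
  have step1 : (t.card : ℝ) ≤ (∑ j ∈ Finset.range M, osc f r j) / r + M := by
    have h := count_le f hf r hr0 t hsub hsep
    rw [← hM, Finset.sum_add_distrib, Finset.sum_const, Finset.card_range, nsmul_eq_mul,
      mul_one, ← Finset.sum_div] at h
    exact h
  have hsum : ∑ j ∈ Finset.range M, osc f r j ≤ M * (2*B) := by
    calc ∑ j ∈ Finset.range M, osc f r j ≤ ∑ _j ∈ Finset.range M, 2*B :=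
          Finset.sum_le_sum (fun j _ => hosc j)
      _ = M * (2*B) := by rw [Finset.sum_const, Finset.card_range, nsmul_eq_mul]
  have hr2 : r ^ (-(2:ℝ)) = 1/(r*r) := by
    rw [show (-(2:ℝ)) = (-1) + (-1) by norm_num, Real.rpow_add hr0, Real.rpow_neg_one]
    field_simp
  have hMnn : (0:ℝ) ≤ M := Nat.cast_nonneg _
  have dv : ∀ a b : ℝ, a ≤ b → a / r ≤ b / r := fun a b h => by gcongr
  calc (t.card : ℝ) ≤ (∑ j ∈ Finset.range M, osc f r j) / r + M := step1
    _ ≤ ((M:ℝ) * (2*B)) / r + 2/r := by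
        have e1 := dv _ _ hsum
        linarith
    _ ≤ ((2/r) * (2*B)) / r + 2/(r*r) := by
        have e2 := dv _ _ (mul_le_mul_of_nonneg_right hMle (by linarith : (0:ℝ) ≤ 2*B))
        have e4 : 2/r ≤ 2/(r*r) := by
          rw [div_le_div_iff₀ hr0 (by positivity)]
          nlinarith
        linarith
    _ = (4*B+2) * (1/(r*r)) := by field_simp; ring
    _ = (4*B+2) * r ^ (-(2:ℝ)) := by rw [hr2]

theorem ubdGraph_le_aux (f : ℝ → ℝ) (hf : ContinuousOn f (Set.Icc 0 1)) :
    ubdGraph f ≤ 2 - 1 / varIndex f := by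
  by_cases hI : varIndex f = ⊤
  · rw [hI]
    calc ubdGraph f ≤ ENNReal.ofReal 2 := trivial_bound f hf
      _ = 2 := by norm_num
      _ ≤ 2 - 1/⊤ := by simp
  · set t := (varIndex f).toReal with ht
    have hIge1 : (1:ℝ≥0∞) ≤ varIndex f := le_sup_left
    have ht1 : 1 ≤ t := by
      have := ENNReal.toReal_mono hI hIge1
      simpa using this
    have htpos : (0:ℝ) < t := by linarith
    have hIof : varIndex f = ENNReal.ofReal t := (ENNReal.ofReal_toReal hI).symm
    have hRHS : (2:ℝ≥0∞) - 1 / varIndex f = ENNReal.ofReal (2 - 1/t) := by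
      have h0 : (1:ℝ≥0∞) / varIndex f = ENNReal.ofReal (1/t) := by
        rw [hIof, one_div, one_div, ENNReal.ofReal_inv_of_pos htpos]
      have h2 : (2:ℝ≥0∞) = ENNReal.ofReal 2 := by norm_num
      rw [h0, h2]
      exact (ENNReal.ofReal_sub 2 (by positivity)).symm
    rw [hRHS]
    apply ENNReal.le_of_forall_pos_le_add
    intro ε hε _
    have hεr : (0:ℝ) < ε := hε
    set p : ℝ := t + ε with hpdef
    have hp1 : 1 ≤ p := by simp only [hpdef]; linarith
    have hVp : pVar f p ≠ ⊤ := by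
      intro hcon
      have hle : ENNReal.ofReal p ≤ varIndex f :=
        le_sup_of_le_right
          (le_iSup_of_le p (le_iSup_of_le hp1 (le_iSup_of_le hcon le_rfl)))
      rw [hIof, ENNReal.ofReal_le_ofReal_iff (by linarith)] at hle
      simp only [hpdef] at hle
      linarith
    refine le_trans (core_bound f hf hp1 hVp) ?_
    have harith : 2 - 1/p ≤ (2 - 1/t) + ε := by
      have hppos : (0:ℝ) < p := by simp only [hpdef]; linarith
      have h1 : 1/t - 1/p = ε / (t * p) := by
        field_simp
        simp only [hpdef]
        ring
      have htp : (1:ℝ) ≤ t * p := by nlinarith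
      have h2 : (ε:ℝ) / (t*p) ≤ ε := by
        rw [div_le_iff₀ (by positivity)]
        nlinarith
      linarith
    calc ENNReal.ofReal (2 - 1/p) ≤ ENNReal.ofReal ((2 - 1/t) + ε) :=
          ENNReal.ofReal_le_ofReal harith
      _ = ENNReal.ofReal (2 - 1/t) + ENNReal.ofReal ε := by
          have hinv : 1/t ≤ 1 := by rw [div_le_one htpos]; exact ht1
          exact ENNReal.ofReal_add (by linarith) hεr.le
      _ = ENNReal.ofReal (2 - 1/t) + ε := by rw [ENNReal.ofReal_coe_nnreal]

end UbdGraphAux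

noncomputable section

/-- The upper box dimension of the graph of a continuous `f : [0,1] → ℝ` is at most
`2 - 1/I(f)`. -/
theorem ubdGraph_le (f : ℝ → ℝ) (hf : ContinuousOn f (Set.Icc 0 1)) :
    ubdGraph f ≤ 2 - 1 / varIndex f := by
  open UbdGraphAux in
  exact ubdGraph_le_aux f hf

end
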